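/- Let G be a finitely generated group acting on a CAT(0) cube complex C. If G has an orbit that is unbounded with respect to the ℓ∞-metric, then there exists a half-space D of C and an element g ∈ G with gD ⊊ D. -/

import Mathlib

/-- An abstract combinatorial model of a CAT(0) cube complex: a set of vertices `V`
together with a set of hyperplanes (walls) `H`, each hyperplane dividing the vertices
into two halfspaces via `side`.  Two hyperplanes are transverse exactly when they cross
(all four quadrants are inhabited), and only finitely many hyperplanes separate two
given vertices. -/
structure CCC where
  V : Type
  H : Type
  side : H → V → Prop
  transverse : H → H → Prop
  transverse_symm : ∀ h h', transverse h h' → transverse h' h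
  transverse_iff : ∀ h h', transverse h h' ↔ (h ≠ h' ∧ ∃ a b c d : V,
      (side h a ∧ side h' a) ∧ (side h b ∧ ¬ side h' b) ∧
      (¬ side h c ∧ side h' c) ∧ (¬ side h d ∧ ¬ side h' d))
  finsep : ∀ x y : V, {h : H | ¬ (side h x ↔ side h y)}.Finite

namespace CCC

variable (W : CCC)

/-- The hyperplane `h` separates the vertices `x` and `y`. -/
def Sep (h : W.H) (x y : W.V) : Prop := ¬ (W.side h x ↔ W.side h y)

/-- The combinatorial (ℓ¹) distance between vertices: the number of separating
hyperplanes. -/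
noncomputable def dist (x y : W.V) : ℕ := {h : W.H | W.Sep h x y}.ncard

/-- Two hyperplanes are disjoint if they are distinct and not transverse. -/
def Disj (h h' : W.H) : Prop := h ≠ h' ∧ ¬ W.transverse h h'

/-- The ℓ∞ distance between vertices: the maximal number of pairwise disjoint
hyperplanes separating them. -/
noncomputable def dinf (x y : W.V) : ℕ :=
  sSup {n : ℕ | ∃ S : Finset W.H, S.card = n ∧ (∀ h ∈ S, W.Sep h x y) ∧
    (S : Set W.H).Pairwise W.Disj}

/-- A set of vertices is combinatorially convex if it contains every vertex lying on a
combinatorial geodesic between two of its points. -/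
def Convex (C : Set W.V) : Prop :=
  ∀ x ∈ C, ∀ y ∈ C, ∀ z : W.V, W.dist x z + W.dist z y = W.dist x y → z ∈ C

theorem dist_comm (x y : W.V) : W.dist x y = W.dist y x := by
  unfold dist
  congr 1
  ext h
  simp only [Set.mem_setOf_eq, Sep]
  tauto

theorem dist_self (x : W.V) : W.dist x x = 0 := by
  have h : {h : W.H | W.Sep h x x} = ∅ := by ext h; simp [Sep]
  simp [dist, h]

/-- The 1-skeleton of the cube complex: two vertices are adjacent when exactly one
hyperplane separates them. -/
def oneSkeleton : SimpleGraph W.V where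
  Adj x y := W.dist x y = 1
  symm := ⟨fun x y hxy => (W.dist_comm y x).trans hxy⟩
  loopless := ⟨fun x hx => by have := W.dist_self x; omega⟩

/-- `m` is a median vertex of `x`, `y`, `z`. -/
def IsMedian (x y z m : W.V) : Prop :=
  W.dist x y = W.dist x m + W.dist m y ∧
  W.dist x z = W.dist x m + W.dist m z ∧
  W.dist y z = W.dist y m + W.dist m z

/-- The hyperplane `J` separates the hyperplanes `A` and `B`: all of `A` lies in one
halfspace of `J` and all of `B` in the other. -/
def SepHH (J A B : W.H) : Prop :=
  ((∀ x y : W.V, W.Sep A x y → W.side J x) ∧ (∀ x y : W.V, W.Sep B x y → ¬ W.side J x)) ∨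
  ((∀ x y : W.V, W.Sep A x y → ¬ W.side J x) ∧ (∀ x y : W.V, W.Sep B x y → W.side J x))

/-- A `(p,q)`-grid of hyperplanes: two families of hyperplanes, each hyperplane of the
first transverse to each of the second, and inside each family every hyperplane
separates its two neighbours. -/
def IsGrid {p q : ℕ} (v : Fin p → W.H) (hh : Fin q → W.H) : Prop :=
  Function.Injective v ∧ Function.Injective hh ∧
  (∀ (i : Fin p) (j : Fin q), W.transverse (v i) (hh j)) ∧
  (∀ i : Fin p, 0 < i.val → ∀ (hlt : i.val + 1 < p),
    W.SepHH (v i) (v ⟨i.val - 1, lt_of_le_of_lt (Nat.sub_le _ _) i.isLt⟩) (v ⟨i.val + 1, hlt⟩)) ∧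
  (∀ j : Fin q, 0 < j.val → ∀ (hlt : j.val + 1 < q),
    W.SepHH (hh j) (hh ⟨j.val - 1, lt_of_le_of_lt (Nat.sub_le _ _) j.isLt⟩) (hh ⟨j.val + 1, hlt⟩))

/-- A discrete geodesic for the ℓ∞ metric: a chain of vertices from `x` to `y`, each
step of `dinf`-length at most one, whose number of steps is `dinf x y`. -/
def IsInfGeodesic {n : ℕ} (x y : W.V) (f : Fin (n + 1) → W.V) : Prop :=
  f 0 = x ∧ f (Fin.last n) = y ∧ n = W.dinf x y ∧
  ∀ i : Fin n, W.dinf (f i.castSucc) (f i.succ) ≤ 1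

end CCC

set_option maxHeartbeats 1000000 in
/-- If a finitely generated group `Γ` acts on a CAT(0) cube complex with an orbit which
is unbounded for the ℓ∞-metric, then some element sends some half-space strictly inside
itself. -/
theorem stmt_14 (W : CCC) (Γ : Type) [Group Γ] (hFG : Group.FG Γ)
    (φ : Γ → W.V → W.V) (ψ : Γ → W.H → W.H)
    (hφ1 : φ 1 = id) (hφm : ∀ g g' : Γ, φ (g * g') = φ g ∘ φ g')
    (hφbij : ∀ g : Γ, Function.Bijective (φ g))
    (hψbij : ∀ g : Γ, Function.Bijective (ψ g))
    (hcompat : ∀ (g : Γ) (h : W.H) (v : W.V), W.side (ψ g h) (φ g v) ↔ W.side h v)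
    (hunb : ∃ v : W.V, ∀ M : ℕ, ∃ g : Γ, M ≤ W.dinf v (φ g v)) :
    ∃ (J : W.H) (D : Set W.V) (g : Γ),
      (D = {v : W.V | W.side J v} ∨ D = {v : W.V | ¬ W.side J v}) ∧
      (φ g) '' D ⊂ D := by
  classical
  obtain ⟨v, hv⟩ := hunb
  obtain ⟨Sset, hSclos, hSfin⟩ := Group.fg_iff.mp hFG
  -- basic facts about the action
  have hφid : ∀ u : W.V, φ 1 u = u := fun u => by rw [hφ1]; rfl
  have hφmul : ∀ (g g' : Γ) (u : W.V), φ (g * g') u = φ g (φ g' u) := fun g g' u => by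
    rw [hφm]; rfl
  have hφinv : ∀ (g : Γ) (u : W.V), φ g (φ g⁻¹ u) = u := fun g u => by
    rw [← hφmul, mul_inv_cancel, hφid]
  set ss : W.H → Set W.V := fun h => {u : W.V | W.side h u} with hssdef
  have himg : ∀ (g : Γ) (h : W.H), φ g '' ss h = ss (ψ g h) := by
    intro g h
    ext u
    constructor
    · rintro ⟨x, hx, rfl⟩
      exact (hcompat g h x).2 hx
    · intro hu
      refine ⟨φ g⁻¹ u, ?_, hφinv g u⟩
      have h2 := hcompat g h (φ g⁻¹ u)
      rw [hφinv] at h2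
      exact h2.1 hu
  have himgc : ∀ (g : Γ) (h : W.H), φ g '' (ss h)ᶜ = (ss (ψ g h))ᶜ := fun g h => by
    rw [Set.image_compl_eq (hφbij g), himg]
  have himul : ∀ (g g' : Γ) (B : Set W.V), φ (g * g') '' B = φ g '' (φ g' '' B) := by
    intro g g' B; rw [hφm, Set.image_comp]
  have hBinv : ∀ (g : Γ) (B : Set W.V), φ g⁻¹ '' (φ g '' B) = B := by
    intro g B
    rw [← himul, inv_mul_cancel, hφ1, Set.image_id]
  have himginj : ∀ (g : Γ) (B C : Set W.V), φ g '' B = φ g '' C → B = C := by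
    intro g B C hbc
    have h2 := congrArg (fun X => φ g⁻¹ '' X) hbc
    simpa [hBinv] using h2
  -- Sep only depends on the side set, up to complement
  have hSepss : ∀ (h h' : W.H) (x y : W.V),
      (ss h = ss h' ∨ ss h = (ss h')ᶜ) → W.Sep h' x y → W.Sep h x y := by
    intro h h' x y hc hsep
    rcases hc with hc | hc
    · have e1 : W.side h x ↔ W.side h' x := Set.ext_iff.mp hc x
      have e2 : W.side h y ↔ W.side h' y := Set.ext_iff.mp hc y
      intro hiff; exact hsep ((e1.symm.trans hiff).trans e2)
    · have e1 : W.side h x ↔ ¬ W.side h' x := Set.ext_iff.mp hc x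
      have e2 : W.side h y ↔ ¬ W.side h' y := Set.ext_iff.mp hc y
      intro hiff
      exact hsep (by tauto)
  -- Sep is equivariant
  have hSepeq : ∀ (g : Γ) (h : W.H) (x y : W.V),
      W.Sep (ψ g h) (φ g x) (φ g y) ↔ W.Sep h x y := by
    intro g h x y
    simp only [CCC.Sep, hcompat]
  -- the family F of reference halfspaces
  set F : Set (Set W.V) := {B | ∃ s ∈ Sset, ∃ h0 : W.H,
      W.Sep h0 v (φ s v) ∧ (B = ss h0 ∨ B = (ss h0)ᶜ)} with hFdef
  have hFcompl : ∀ B ∈ F, Bᶜ ∈ F := by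
    rintro B ⟨s, hs, h0, hsep, hB | hB⟩
    · exact ⟨s, hs, h0, hsep, Or.inr (by rw [hB])⟩
    · exact ⟨s, hs, h0, hsep, Or.inl (by rw [hB, compl_compl])⟩
  have hFfin : F.Finite := by
    have hsub : F ⊆ ⋃ s ∈ Sset, (ss '' {h0 | W.Sep h0 v (φ s v)} ∪
        (fun h0 => (ss h0)ᶜ) '' {h0 | W.Sep h0 v (φ s v)}) := by
      rintro B ⟨s, hs, h0, hsep, hB | hB⟩
      · exact Set.mem_biUnion hs (Set.mem_union_left _ ⟨h0, hsep, hB.symm⟩)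
      · exact Set.mem_biUnion hs (Set.mem_union_right _ ⟨h0, hsep, hB.symm⟩)
    exact Set.Finite.subset (Set.Finite.biUnion hSfin fun s _ =>
      ((W.finsep v (φ s v)).image ss).union ((W.finsep v (φ s v)).image _)) hsub
  -- the "duplicate count" sets
  set T0 : Set W.V → Set W.H := fun B => {h : W.H | ss h = B ∨ ss h = Bᶜ} with hT0def
  have hT0img : ∀ (g : Γ) (B : Set W.V), T0 (φ g '' B) = ψ g '' T0 B := by
    intro g B
    ext h'
    constructor
    · intro hh'
      obtain ⟨h, rfl⟩ := (hψbij g).2 h'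
      refine ⟨h, ?_, rfl⟩
      rcases hh' with h1 | h1
      · exact Or.inl (himginj g _ _ (by rw [himg]; exact h1))
      · refine Or.inr (himginj g _ _ ?_)
        rw [himg, h1, Set.image_compl_eq (hφbij g)]
    · rintro ⟨h, hh, rfl⟩
      rcases hh with h1 | h1
      · exact Or.inl (by rw [← himg, h1])
      · exact Or.inr (by rw [← himg, h1, Set.image_compl_eq (hφbij g)])
  have hνinv : ∀ (g : Γ) (B : Set W.V), (T0 (φ g '' B)).ncard = (T0 B).ncard := by
    intro g B
    rw [hT0img, Set.ncard_image_of_injective _ (hψbij g).1]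
  have hT0fin : ∀ B ∈ F, (T0 B).Finite := by
    rintro B ⟨s, hs, h0, hsep, hB⟩
    refine (W.finsep v (φ s v)).subset ?_
    intro h hh
    refine hSepss h h0 v (φ s v) ?_ hsep
    rcases hh with h1 | h1 <;> rcases hB with h2 | h2
    · exact Or.inl (by rw [h1, h2])
    · exact Or.inr (by rw [h1, h2])
    · exact Or.inr (by rw [h1, h2])
    · exact Or.inl (by rw [h1, h2, compl_compl])
  -- key: every halfspace containing v cut off by an orbit point is a translate of F
  have hKEY : ∀ g : Γ, ∀ h : W.H, W.Sep h v (φ g v) → ∃ B ∈ F, ∃ w : Γ, ss h = φ w '' B := by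
    intro g
    have hg : g ∈ Subgroup.closure Sset := by rw [hSclos]; exact Subgroup.mem_top g
    induction hg using Subgroup.closure_induction with
    | mem s hs =>
      intro h hsep
      exact ⟨ss h, ⟨s, hs, h, hsep, Or.inl rfl⟩, 1, by rw [hφ1, Set.image_id]⟩
    | one =>
      intro h hsep
      rw [hφid] at hsep
      exact absurd Iff.rfl hsep
    | mul a b ha hb iha ihb =>
      intro h hsep
      by_cases hc : W.Sep h v (φ a v)
      · exact iha h hc
      · have hiff : W.side h v ↔ W.side h (φ a v) := not_not.mp hc
        obtain ⟨k, rfl⟩ := (hψbij a).2 h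
        have hsep' : W.Sep k v (φ b v) := by
          refine (hSepeq a k v (φ b v)).mp ?_
          intro hif
          apply hsep
          rw [hφmul]
          exact hiff.trans hif
        obtain ⟨B, hB, w, hw⟩ := ihb k hsep'
        exact ⟨B, hB, a * w, by rw [himul, ← hw, himg]⟩
    | inv a ha iha =>
      intro h hsep
      have hsep' : W.Sep (ψ a h) v (φ a v) := by
        have h1 : W.Sep (ψ a h) (φ a v) (φ a (φ a⁻¹ v)) := (hSepeq a h v (φ a⁻¹ v)).mpr hsep
        rw [hφinv] at h1
        intro hif; exact h1 hif.symm
      obtain ⟨B, hB, w, hw⟩ := iha (ψ a h) hsep'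
      refine ⟨B, hB, a⁻¹ * w, ?_⟩
      rw [himul, ← hw, ← himg, hBinv]
  -- the halfspace at h containing v
  set A : W.H → Set W.V := fun h => {u : W.V | W.side h u ↔ W.side h v} with hAdef
  have hAcases : ∀ h : W.H, (W.side h v ∧ A h = ss h) ∨ (¬ W.side h v ∧ A h = (ss h)ᶜ) := by
    intro h
    by_cases hsv : W.side h v
    · refine Or.inl ⟨hsv, ?_⟩
      ext u; simp [hAdef, hssdef, hsv]
    · refine Or.inr ⟨hsv, ?_⟩
      ext u; simp [hAdef, hssdef, hsv]
  have hAcompl : ∀ h : W.H, ss h = A h ∨ ss h = (A h)ᶜ := by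
    intro h
    rcases hAcases h with ⟨_, hA⟩ | ⟨_, hA⟩
    · exact Or.inl hA.symm
    · exact Or.inr (by rw [hA, compl_compl])
  have hKEYA : ∀ (g : Γ) (h : W.H), W.Sep h v (φ g v) → ∃ B w, B ∈ F ∧ A h = φ w '' B := by
    intro g h hsep
    obtain ⟨B, hB, w, hw⟩ := hKEY g h hsep
    rcases hAcases h with ⟨_, hA⟩ | ⟨_, hA⟩
    · exact ⟨B, w, hB, by rw [hA, hw]⟩
    · exact ⟨Bᶜ, w, hFcompl B hB, by rw [hA, hw, Set.image_compl_eq (hφbij w)]⟩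
  -- comparability of the halfspaces A h for disjoint separators
  have hcmp : ∀ (x : W.V) (h h' : W.H), W.Sep h v x → W.Sep h' v x → W.Disj h h' →
      A h ⊆ A h' ∨ A h' ⊆ A h := by
    intro x h h' hs hs' hdisj
    by_contra hcon
    push_neg at hcon
    obtain ⟨p, hp1, hp2⟩ := Set.not_subset.mp hcon.1
    obtain ⟨q, hq1, hq2⟩ := Set.not_subset.mp hcon.2
    apply hdisj.2
    rw [W.transverse_iff h h']
    refine ⟨hdisj.1, ?_⟩
    have hpv : W.side h p ↔ W.side h v := hp1
    have hpv' : ¬ (W.side h' p ↔ W.side h' v) := hp2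
    have hqv' : W.side h' q ↔ W.side h' v := hq1
    have hqv : ¬ (W.side h q ↔ W.side h v) := hq2
    have hxv : ¬ (W.side h x ↔ W.side h v) := fun hh => hs (Iff.symm hh)
    have hxv' : ¬ (W.side h' x ↔ W.side h' v) := fun hh => hs' (Iff.symm hh)
    by_cases h1 : W.side h v <;> by_cases h2 : W.side h' v
    · exact ⟨v, p, q, x, by tauto⟩
    · exact ⟨p, v, x, q, by tauto⟩
    · exact ⟨q, x, v, p, by tauto⟩
    · exact ⟨x, q, p, v, by tauto⟩
  -- now extract a large family of pairwise disjoint separating hyperplanes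
  set Ffin : Finset (Set W.V) := hFfin.toFinset with hFfindef
  set n' : ℕ := Ffin.sup (fun B => (T0 B).ncard) with hn'def
  obtain ⟨g, hg⟩ := hv (Ffin.card * n' + 1)
  obtain ⟨n, hnmem, hMn⟩ : ∃ n ∈ {n : ℕ | ∃ S : Finset W.H, S.card = n ∧
      (∀ h ∈ S, W.Sep h v (φ g v)) ∧ (S : Set W.H).Pairwise W.Disj},
      Ffin.card * n' + 1 ≤ n := by
    by_cases hbdd : BddAbove {n : ℕ | ∃ S : Finset W.H, S.card = n ∧
      (∀ h ∈ S, W.Sep h v (φ g v)) ∧ (S : Set W.H).Pairwise W.Disj}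
    · exact ⟨_, Nat.sSup_mem ⟨0, ∅, by simp, by simp, by simp⟩ hbdd, hg⟩
    · obtain ⟨y, hy, hy2⟩ := not_bddAbove_iff.mp hbdd (Ffin.card * n' + 1)
      exact ⟨y, hy, hy2.le⟩
  obtain ⟨S0, hcard, hsep0, hpair⟩ := hnmem
  have hchoice : ∀ h ∈ S0, ∃ B w, B ∈ F ∧ A h = φ w '' B := fun h hh =>
    hKEYA g h (hsep0 h hh)
  choose! Bf wf hBF hAB using hchoice
  have hmaps : ∀ h ∈ S0, Bf h ∈ Ffin := fun h hh => hFfin.mem_toFinset.mpr (hBF h hh)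
  have hlt : Ffin.card * n' < S0.card := by rw [hcard]; omega
  obtain ⟨B0, hB0t, hfib⟩ := Finset.exists_lt_card_fiber_of_mul_lt_card_of_maps_to hmaps hlt
  have hB0F : B0 ∈ F := hFfin.mem_toFinset.mp hB0t
  set fib : Finset W.H := S0.filter (fun h => Bf h = B0) with hfibdef
  have hfib2 : n' < fib.card := hfib
  have hfibS0 : ∀ h ∈ fib, h ∈ S0 := fun h hh => (Finset.mem_filter.mp hh).1
  have hfibB : ∀ h ∈ fib, A h = φ (wf h) '' B0 := by
    intro h hh
    have h1 := hAB h (hfibS0 h hh)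
    rwa [(Finset.mem_filter.mp hh).2] at h1
  -- two distinct halfspaces in the fiber
  have hexists2 : ∃ h1 ∈ fib, ∃ h2 ∈ fib, A h1 ≠ A h2 := by
    by_contra hcon
    push_neg at hcon
    obtain ⟨h₀, hh₀⟩ := Finset.card_pos.mp (Nat.lt_of_le_of_lt (Nat.zero_le n') hfib2)
    have hsub : ↑fib ⊆ T0 (A h₀) := by
      intro h hh
      have hh' : h ∈ fib := Finset.mem_coe.mp hh
      have heqA : A h = A h₀ := hcon h hh' h₀ hh₀
      rcases hAcompl h with h1 | h1
      · exact Or.inl (by rw [h1, heqA])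
      · exact Or.inr (by rw [h1, heqA])
    have hfin : (T0 (A h₀)).Finite := by
      rw [hfibB h₀ hh₀, hT0img]
      exact (hT0fin B0 hB0F).image _
    have hle : fib.card ≤ (T0 (A h₀)).ncard := by
      rw [← Set.ncard_coe_finset]
      exact Set.ncard_le_ncard hsub hfin
    have heq : (T0 (A h₀)).ncard = (T0 B0).ncard := by rw [hfibB h₀ hh₀, hνinv]
    have hle2 : (T0 B0).ncard ≤ n' := by
      rw [hn'def]
      exact Finset.le_sup (f := fun B => (T0 B).ncard) hB0t
    omega
  obtain ⟨h1, hm1, h2, hm2, hA12⟩ := hexists2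
  have hne12 : h1 ≠ h2 := fun hh => hA12 (by rw [hh])
  have hdisj : W.Disj h1 h2 :=
    hpair (Finset.mem_coe.mpr (hfibS0 h1 hm1)) (Finset.mem_coe.mpr (hfibS0 h2 hm2)) hne12
  have hcomp := hcmp (φ g v) h1 h2 (hsep0 h1 (hfibS0 h1 hm1)) (hsep0 h2 (hfibS0 h2 hm2)) hdisj
  have final : ∀ ha hb : W.H, ha ∈ fib → hb ∈ fib → A ha ⊆ A hb → A ha ≠ A hb →
      ∃ (J : W.H) (D : Set W.V) (g : Γ),
        (D = {v : W.V | W.side J v} ∨ D = {v : W.V | ¬ W.side J v}) ∧ (φ g) '' D ⊂ D := by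
    intro ha hb hma hmb hsubAB hneAB
    obtain ⟨s, hs, h0, hsep00, hB0⟩ := hB0F
    have hAb := hfibB hb hmb
    have hAa := hfibB ha hma
    refine ⟨ψ (wf hb) h0, A hb, wf ha * (wf hb)⁻¹, ?_, ?_⟩
    · rcases hB0 with hB | hB
      · left
        rw [hAb, hB, himg, hssdef]
      · right
        rw [hAb, hB, himgc, hssdef]
        ext u
        simp
    · have him : φ (wf ha * (wf hb)⁻¹) '' A hb = A ha := by
        rw [himul, hAb, hBinv, hAa]
      rw [him]
      exact Set.ssubset_iff_subset_ne.mpr ⟨hsubAB, hneAB⟩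
  rcases hcomp with hc | hc
  · exact final h1 h2 hm1 hm2 hc hA12
  · exact final h2 h1 hm2 hm1 hc (Ne.symm hA12)
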